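/- Let 𝓘 : 𝔖₂ → [0,∞) be a definition of energy (continuous, monotone, degree-2 homogeneous, SO₂-invariant, proper). For every norm s on ℝ², the infimum Ĵ(s) = inf{𝓘(s∘T) : T ∈ SL(2,ℝ)} is attained: there exists T₀ ∈ SL(2,ℝ) with 𝓘(s∘T₀) = Ĵ(s). -/

import Mathlib

open Matrix MeasureTheory Real

noncomputable section

/-- The Euclidean plane. -/
abbrev E2 := EuclideanSpace ℝ (Fin 2)

/-- `SL(2,ℝ)` as matrices of determinant one. -/
abbrev SL2 := Matrix.SpecialLinearGroup (Fin 2) ℝ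

/-- The seminorm `v ↦ s (M v)`, i.e. `s ∘ M`. -/
def compM (s : Seminorm ℝ E2) (M : Matrix (Fin 2) (Fin 2) ℝ) : Seminorm ℝ E2 :=
  s.comp (Matrix.toEuclideanLin M)

/-- A seminorm is a norm iff it is positive away from the origin. -/
def IsNorm (s : Seminorm ℝ E2) : Prop := ∀ v : E2, v ≠ 0 → 0 < s v

/-- Monotonicity of a functional on seminorms. -/
def Monot (J : Seminorm ℝ E2 → ℝ) : Prop := ∀ s s' : Seminorm ℝ E2, s' ≤ s → J s' ≤ J s

/-- Degree 2 homogeneity of a functional on seminorms. -/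
def Homog (J : Seminorm ℝ E2 → ℝ) : Prop :=
  ∀ (c : NNReal) (s : Seminorm ℝ E2), J (c • s) = (c : ℝ) ^ 2 * J s

/-- `SL₂`-invariance of a functional on seminorms. -/
def SL2inv (J : Seminorm ℝ E2 → ℝ) : Prop :=
  ∀ (s : Seminorm ℝ E2) (T : SL2), J (compM s (T : Matrix (Fin 2) (Fin 2) ℝ)) = J s

/-- The Reshetnyak energy `I²₊(s) = max_{v ∈ S¹} s(v)²`. -/
def Iplus (s : Seminorm ℝ E2) : ℝ := ⨆ v : Metric.sphere (0 : E2) 1, (s (v : E2)) ^ 2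

/-- The unit ball of a seminorm. -/
def unitBallS (s : Seminorm ℝ E2) : Set E2 := {v | s v ≤ 1}

/-- The ellipse `M(D̄)` is inscribed in the unit ball of `s`. -/
def ellipseIn (s : Seminorm ℝ E2) (M : Matrix (Fin 2) (Fin 2) ℝ) : Prop :=
  (Matrix.toEuclideanLin M) '' (Metric.closedBall 0 1) ⊆ unitBallS s

/-- The area of the largest ellipse inscribed in the unit ball of `s`
(the area of the Loewner ellipse); the ellipse `M(D̄)` has area `π |det M|`. -/
def LoewnerArea (s : Seminorm ℝ E2) : ℝ :=
  sSup {a : ℝ | ∃ M : Matrix (Fin 2) (Fin 2) ℝ, ellipseIn s M ∧ a = π * |M.det|}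

/-- The inscribed Riemannian (Ivanov) Jacobian `J^i(s) = π / |L|`. -/
def Ji (s : Seminorm ℝ E2) : ℝ := π / LoewnerArea s

/-- `s` is isotropic: some round disc `t·D̄` is inscribed in the unit ball of `s` and has at
least the area of every inscribed ellipse, i.e. the Loewner ellipse is a round disc. -/
def Isotropic (s : Seminorm ℝ E2) : Prop :=
  ∃ t : ℝ, 0 < t ∧ Metric.closedBall (0 : E2) t ⊆ unitBallS s ∧
    ∀ M : Matrix (Fin 2) (Fin 2) ℝ, ellipseIn s M → π * |M.det| ≤ π * t ^ 2

/-- A Jacobian (definition of area): monotone, degree-2 homogeneous, `SL₂`-invariant,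
normalized on the Euclidean norm. -/
def IsJacobian (J : Seminorm ℝ E2 → ℝ) : Prop :=
  (∀ s, 0 ≤ J s) ∧ Monot J ∧ Homog J ∧ SL2inv J ∧ J (normSeminorm ℝ E2) = 1

/-- Continuity with respect to the sup-metric `d(s,s') = max_{v ∈ S¹} |s v - s' v|`. -/
def ContinuousSN (I : Seminorm ℝ E2 → ℝ) : Prop :=
  ∀ s : Seminorm ℝ E2, ∀ ε > (0 : ℝ), ∃ δ > (0 : ℝ), ∀ s' : Seminorm ℝ E2,
    (∀ v : E2, ‖v‖ = 1 → |s' v - s v| ≤ δ) → |I s' - I s| ≤ ε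

/-- `SO₂`-invariance of a functional on seminorms. -/
def SO2inv (I : Seminorm ℝ E2 → ℝ) : Prop :=
  ∀ (s : Seminorm ℝ E2) (T : Matrix (Fin 2) (Fin 2) ℝ),
    T ∈ Matrix.orthogonalGroup (Fin 2) ℝ → T.det = 1 → I (compM s T) = I s

/-- Properness: the sublevel set `I⁻¹([0,1])` is (sequentially) compact with respect to the
sup-metric on the unit circle. -/
def ProperEnergy (I : Seminorm ℝ E2 → ℝ) : Prop :=
  ∀ f : ℕ → Seminorm ℝ E2, (∀ n, I (f n) ≤ 1) →
    ∃ (s : Seminorm ℝ E2) (φ : ℕ → ℕ), StrictMono φ ∧ I s ≤ 1 ∧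
      Filter.Tendsto (fun n => ⨆ v : Metric.sphere (0 : E2) 1, |f (φ n) (v : E2) - s (v : E2)|)
        Filter.atTop (nhds 0)

/-- A (conformally invariant) definition of energy. -/
def IsEnergy (I : Seminorm ℝ E2 → ℝ) : Prop :=
  (∀ s, 0 ≤ I s) ∧ ContinuousSN I ∧ Monot I ∧ Homog I ∧ SO2inv I ∧ ProperEnergy I

/-! Auxiliary lemmas -/

lemma sem_apply_le (p : Seminorm ℝ E2) (v : E2) :
    p v ≤ |v 0| * p (EuclideanSpace.single 0 (1:ℝ)) + |v 1| * p (EuclideanSpace.single 1 1) := by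
  have h : v = v 0 • EuclideanSpace.single 0 (1:ℝ) + v 1 • EuclideanSpace.single 1 1 := by
    ext i; fin_cases i <;> simp [EuclideanSpace.single_apply]
  calc p v = p (v 0 • EuclideanSpace.single 0 (1:ℝ) + v 1 • EuclideanSpace.single 1 1) := by
        rw [← h]
    _ ≤ p (v 0 • EuclideanSpace.single 0 (1:ℝ)) + p (v 1 • EuclideanSpace.single 1 1) :=
        map_add_le_add p _ _
    _ = |v 0| * p (EuclideanSpace.single 0 (1:ℝ)) + |v 1| * p (EuclideanSpace.single 1 1) := by
        rw [map_smul_eq_mul, map_smul_eq_mul]; simp [Real.norm_eq_abs]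

lemma abs_coord_le (v : E2) (i : Fin 2) : |v i| ≤ ‖v‖ := by
  rw [EuclideanSpace.norm_eq, ← Real.sqrt_sq_eq_abs]
  apply Real.sqrt_le_sqrt
  have := Finset.single_le_sum (f := fun j => ‖v j‖ ^ 2)
    (fun j _ => by positivity) (Finset.mem_univ i)
  simpa [Real.norm_eq_abs, sq_abs] using this

lemma sem_bound (p : Seminorm ℝ E2) :
    ∀ v : E2, p v ≤ (p (EuclideanSpace.single 0 (1:ℝ)) + p (EuclideanSpace.single 1 1)) * ‖v‖ := by
  intro v
  refine (sem_apply_le p v).trans ?_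
  have h0 := abs_coord_le v 0
  have h1 := abs_coord_le v 1
  have n0 : (0:ℝ) ≤ p (EuclideanSpace.single 0 (1:ℝ)) := apply_nonneg p _
  have n1 : (0:ℝ) ≤ p (EuclideanSpace.single 1 (1:ℝ)) := apply_nonneg p _
  nlinarith [abs_nonneg (v 0), abs_nonneg (v 1)]

lemma sem_continuous (p : Seminorm ℝ E2) : Continuous p := by
  set β := p (EuclideanSpace.single 0 (1:ℝ)) + p (EuclideanSpace.single 1 1) with hβ
  have hβ0 : 0 ≤ β := by positivity
  refine (LipschitzWith.of_dist_le_mul (K := β.toNNReal) (f := fun v : E2 => p v) ?_).continuous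
  intro u v
  rw [Real.dist_eq, dist_eq_norm, Real.coe_toNNReal _ hβ0]
  exact (p.norm_sub_map_le_sub u v).trans (sem_bound p (u - v))

lemma norm_lower (s : Seminorm ℝ E2) (hs : ∀ v : E2, v ≠ 0 → 0 < s v) :
    ∃ α : ℝ, 0 < α ∧ ∀ v : E2, α * ‖v‖ ≤ s v := by
  have hcs : IsCompact (Metric.sphere (0:E2) 1) := isCompact_sphere 0 1
  have hne : (Metric.sphere (0:E2) 1).Nonempty :=
    ⟨EuclideanSpace.single 0 (1:ℝ), by simp⟩
  obtain ⟨v₀, hv₀, hmin⟩ := hcs.exists_isMinOn hne ((sem_continuous s).continuousOn)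
  have hv₀n : ‖v₀‖ = 1 := by simpa using hv₀
  have hv₀0 : v₀ ≠ 0 := by intro h; rw [h] at hv₀n; simp at hv₀n
  refine ⟨s v₀, hs v₀ hv₀0, fun v => ?_⟩
  rcases eq_or_ne v 0 with rfl | hv
  · simp
  · have hn : (0:ℝ) < ‖v‖ := norm_pos_iff.mpr hv
    have hu : (‖v‖⁻¹ • v) ∈ Metric.sphere (0:E2) 1 := by
      simp [norm_smul, abs_of_pos (inv_pos.mpr hn), inv_mul_cancel₀ hn.ne']
    have := hmin hu
    simp only [Set.mem_setOf_eq] at this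
    have h2 : s (‖v‖⁻¹ • v) = ‖v‖⁻¹ * s v := by
      rw [map_smul_eq_mul]; simp [abs_of_pos (inv_pos.mpr hn)]
    rw [h2] at this
    calc s v₀ * ‖v‖ ≤ (‖v‖⁻¹ * s v) * ‖v‖ := by nlinarith
      _ = s v := by field_simp

lemma lin_apply (M : Matrix (Fin 2) (Fin 2) ℝ) (v : E2) (i : Fin 2) :
    (Matrix.toEuclideanLin M v) i = M i 0 * v 0 + M i 1 * v 1 := by
  fin_cases i <;> simp [Matrix.toEuclideanLin_apply, Matrix.mulVec, dotProduct, Fin.sum_univ_two]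

lemma compM_apply (s : Seminorm ℝ E2) (M : Matrix (Fin 2) (Fin 2) ℝ) (v : E2) :
    compM s M v = s (Matrix.toEuclideanLin M v) := rfl

set_option maxHeartbeats 1000000 in
/-- For a norm `s`, the infimum of `I(s ∘ T)` over `T ∈ SL(2,ℝ)` is attained. -/
theorem stmt12 (I : Seminorm ℝ E2 → ℝ) (hI : IsEnergy I)
    (s : Seminorm ℝ E2) (hs : IsNorm s) :
    ∃ T₀ : SL2, ∀ T : SL2,
      I (compM s (T₀ : Matrix (Fin 2) (Fin 2) ℝ)) ≤ I (compM s (T : Matrix (Fin 2) (Fin 2) ℝ)) := by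
  obtain ⟨Inn, Icont, Imono, Ihom, Iso2, Iprop⟩ := hI
  set Jset : Set ℝ :=
    Set.range (fun T : SL2 => I (compM s (T : Matrix (Fin 2) (Fin 2) ℝ))) with hJset
  have hne : Jset.Nonempty := ⟨_, ⟨1, rfl⟩⟩
  have hbdd : BddBelow Jset := ⟨0, by rintro x ⟨T, rfl⟩; exact Inn _⟩
  set J : ℝ := sInf Jset with hJdef
  have hJnn : 0 ≤ J := le_csInf hne (by rintro x ⟨T, rfl⟩; exact Inn _)
  -- minimizing sequence
  have hseq : ∀ n : ℕ, ∃ T : SL2,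
      I (compM s (T : Matrix (Fin 2) (Fin 2) ℝ)) < J + 1 / ((n : ℝ) + 1) := by
    intro n
    have hpos : (0:ℝ) < 1 / ((n : ℝ) + 1) := by positivity
    obtain ⟨x, hx, hlt⟩ := exists_lt_of_csInf_lt hne
      (show sInf Jset < J + 1 / ((n : ℝ) + 1) by rw [← hJdef]; linarith)
    obtain ⟨T, rfl⟩ := hx
    exact ⟨T, hlt⟩
  choose T hT using hseq
  -- scaling constant
  set c0 : ℝ := Real.sqrt (1 / (J + 1)) with hc0
  have hc0pos : 0 < c0 := Real.sqrt_pos.mpr (by positivity)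
  set c : NNReal := Real.toNNReal c0 with hc
  have hcc : (c : ℝ) = c0 := Real.coe_toNNReal _ hc0pos.le
  have hfle : ∀ n : ℕ, I (c • compM s ((T n : Matrix (Fin 2) (Fin 2) ℝ))) ≤ 1 := by
    intro n
    rw [Ihom]
    have h1 : (c:ℝ)^2 = 1 / (J + 1) := by
      rw [hcc, hc0, Real.sq_sqrt (by positivity)]
    rw [h1]
    have hd : 1 / ((n:ℝ) + 1) ≤ 1 := by
      rw [div_le_one (by positivity)]
      linarith [Nat.cast_nonneg (α := ℝ) n]
    have h2 : I (compM s ((T n : Matrix (Fin 2) (Fin 2) ℝ))) ≤ J + 1 := by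
      linarith [hT n]
    calc 1 / (J + 1) * I (compM s ((T n : Matrix (Fin 2) (Fin 2) ℝ)))
        ≤ 1 / (J + 1) * (J + 1) := mul_le_mul_of_nonneg_left h2 (by positivity)
      _ = 1 := by field_simp
  obtain ⟨slim, φ, hφ, _, htend⟩ := Iprop _ hfle
  -- pointwise bound by the sup
  have hptw : ∀ (p : Seminorm ℝ E2) (v : E2), ‖v‖ = 1 →
      |p v - slim v| ≤ ⨆ u : Metric.sphere (0:E2) 1, |p (u:E2) - slim (u:E2)| := by
    intro p v hv
    have hcont : Continuous fun u : E2 => |p u - slim u| :=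
      ((sem_continuous p).sub (sem_continuous slim)).abs
    have hb : BddAbove (Set.range fun u : Metric.sphere (0:E2) 1 => |p (u:E2) - slim (u:E2)|) := by
      have := (isCompact_sphere (0:E2) 1).bddAbove_image hcont.continuousOn
      rwa [Set.image_eq_range] at this
    exact le_ciSup hb ⟨v, by simp [hv]⟩
  -- eventually the sup is ≤ 1
  obtain ⟨N, hN⟩ := Metric.tendsto_atTop.mp htend 1 one_pos
  have hsup1 : ∀ n, N ≤ n → ∀ v : E2, ‖v‖ = 1 →
      |(c • compM s ((T (φ n) : Matrix (Fin 2) (Fin 2) ℝ))) v - slim v| ≤ 1 := by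
    intro n hn v hv
    refine (hptw _ v hv).trans ?_
    have := hN n hn
    rw [Real.dist_eq, sub_zero] at this
    exact (le_abs_self _).trans this.le
  -- lower bound of s, upper bound of slim
  obtain ⟨α, hα, hαs⟩ := norm_lower s hs
  set blim : ℝ := slim (EuclideanSpace.single 0 (1:ℝ)) + slim (EuclideanSpace.single 1 1) with hblim
  have hblim0 : 0 ≤ blim := by positivity
  set R : ℝ := (blim + 1) / (α * c0) with hR
  -- matrix entries bound
  have hRb : ∀ n, N ≤ n → ∀ i j : Fin 2,
      |(T (φ n) : Matrix (Fin 2) (Fin 2) ℝ) i j| ≤ R := by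
    intro n hn i j
    set M : Matrix (Fin 2) (Fin 2) ℝ := (T (φ n) : Matrix (Fin 2) (Fin 2) ℝ) with hM
    set u : E2 := EuclideanSpace.single j (1:ℝ) with hu
    have hun : ‖u‖ = 1 := by simp [hu]
    set w : E2 := Matrix.toEuclideanLin M u with hw
    have hwi : w i = M i j := by
      fin_cases j <;> simp [hw, hu, lin_apply, EuclideanSpace.single_apply]
    have h1 : |M i j| ≤ ‖w‖ := hwi ▸ abs_coord_le w i
    have h2 : α * ‖w‖ ≤ s w := hαs w
    have h3 : c0 * s w ≤ blim + 1 := by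
      have hpt := hsup1 n hn u hun
      have happ : (c • compM s M) u = c0 * s w := by
        rw [Seminorm.smul_apply, compM_apply, ← hw, NNReal.smul_def, smul_eq_mul, hcc]
      rw [happ] at hpt
      have hub : slim u ≤ blim := by
        have := sem_bound slim u
        rw [hun, mul_one] at this
        exact this
      have := abs_le.mp hpt
      linarith [this.2]
    have h4 : |M i j| * (α * c0) ≤ blim + 1 := by
      have hh1 := mul_le_mul_of_nonneg_left h1 (mul_pos hα hc0pos).le
      have hh2 := mul_le_mul_of_nonneg_right h2 hc0pos.le
      nlinarith [norm_nonneg w, apply_nonneg s w]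
    rw [hR, le_div_iff₀ (by positivity)]
    exact h4
  -- compactness: extract convergent subsequence of matrices
  set g : ℕ → (Fin 2 → Fin 2 → ℝ) :=
    fun n => fun i j => (T (φ (n + N)) : Matrix (Fin 2) (Fin 2) ℝ) i j with hg
  have hK : IsCompact (Set.univ.pi fun _ : Fin 2 => Set.univ.pi fun _ : Fin 2 => Set.Icc (-R) R) :=
    isCompact_univ_pi fun _ => isCompact_univ_pi fun _ => isCompact_Icc
  have hgK : ∀ n, g n ∈ (Set.univ.pi fun _ : Fin 2 => Set.univ.pi fun _ : Fin 2 => Set.Icc (-R) R) := by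
    intro n
    rw [Set.mem_univ_pi]
    intro i
    rw [Set.mem_univ_pi]
    intro j
    exact abs_le.mp (hRb (n + N) (Nat.le_add_left N n) i j)
  obtain ⟨a, _, ψ, hψ, hga⟩ := hK.tendsto_subseq hgK
  set Mn : ℕ → Matrix (Fin 2) (Fin 2) ℝ :=
    fun n => (T (φ (ψ n + N)) : Matrix (Fin 2) (Fin 2) ℝ) with hMn
  have hent : ∀ i j : Fin 2, Filter.Tendsto (fun n => Mn n i j) Filter.atTop (nhds (a i j)) := by
    intro i j
    have h1 := tendsto_pi_nhds.mp hga i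
    exact tendsto_pi_nhds.mp h1 j
  set A : Matrix (Fin 2) (Fin 2) ℝ := Matrix.of a with hA
  have hdet : A.det = 1 := by
    have h1 : Filter.Tendsto (fun n => (Mn n).det) Filter.atTop (nhds A.det) := by
      simp only [Matrix.det_fin_two]
      exact ((hent 0 0).mul (hent 1 1)).sub ((hent 0 1).mul (hent 1 0))
    have h2 : (fun n => (Mn n).det) = fun _ => (1:ℝ) :=
      funext fun n => (T (φ (ψ n + N))).prop
    rw [h2] at h1
    exact tendsto_nhds_unique h1 tendsto_const_nhds
  -- convergence of energies
  have hconv : Filter.Tendsto (fun n => I (compM s (Mn n))) Filter.atTop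
      (nhds (I (compM s A))) := by
    rw [Metric.tendsto_atTop]
    intro ε hε
    obtain ⟨δ, hδ, hδ'⟩ := Icont (compM s A) (ε/2) (by linarith)
    set β : ℝ := s (EuclideanSpace.single 0 (1:ℝ)) + s (EuclideanSpace.single 1 1) with hβd
    have hβ0 : 0 ≤ β := by positivity
    set D : ℕ → ℝ := fun n => ∑ i : Fin 2, ∑ j : Fin 2, |Mn n i j - a i j| with hD
    have hDt : Filter.Tendsto (fun n => D n * β) Filter.atTop (nhds 0) := by
      have h1 : ∀ i j : Fin 2,
          Filter.Tendsto (fun n => |Mn n i j - a i j|) Filter.atTop (nhds 0) := by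
        intro i j
        have := ((hent i j).sub (tendsto_const_nhds (x := a i j))).abs
        simpa using this
      have h2 := tendsto_finset_sum (Finset.univ (α := Fin 2))
        (fun i _ => tendsto_finset_sum (Finset.univ (α := Fin 2)) (fun j _ => h1 i j))
      have h3 : Filter.Tendsto D Filter.atTop (nhds 0) := by
        rw [hD]
        simpa using h2
      have h4 := h3.mul_const β
      rw [zero_mul] at h4
      exact h4
    have hkey : ∀ n, ∀ v : E2, ‖v‖ = 1 →
        |compM s (Mn n) v - compM s A v| ≤ D n * β := by
      intro n v hv
      set w : E2 := Matrix.toEuclideanLin (Mn n - A) v with hw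
      have h1 : |compM s (Mn n) v - compM s A v| ≤ s w := by
        rw [compM_apply, compM_apply]
        have := s.norm_sub_map_le_sub (Matrix.toEuclideanLin (Mn n) v)
          (Matrix.toEuclideanLin A v)
        rw [Real.norm_eq_abs] at this
        refine this.trans (le_of_eq ?_)
        congr 1
        rw [hw, map_sub, LinearMap.sub_apply]
      have h4 : ∀ i : Fin 2, |w i| ≤ |Mn n i 0 - a i 0| + |Mn n i 1 - a i 1| := by
        intro i
        have hv0 : |v 0| ≤ 1 := hv ▸ abs_coord_le v 0
        have hv1 : |v 1| ≤ 1 := hv ▸ abs_coord_le v 1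
        have hwi : w i = (Mn n i 0 - a i 0) * v 0 + (Mn n i 1 - a i 1) * v 1 := by
          rw [hw, lin_apply]
          simp [Matrix.sub_apply, hA]
        rw [hwi]
        calc |(Mn n i 0 - a i 0) * v 0 + (Mn n i 1 - a i 1) * v 1|
            ≤ |(Mn n i 0 - a i 0) * v 0| + |(Mn n i 1 - a i 1) * v 1| := abs_add_le _ _
          _ = |Mn n i 0 - a i 0| * |v 0| + |Mn n i 1 - a i 1| * |v 1| := by
              rw [abs_mul, abs_mul]
          _ ≤ |Mn n i 0 - a i 0| + |Mn n i 1 - a i 1| := by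
              nlinarith [abs_nonneg (Mn n i 0 - a i 0), abs_nonneg (Mn n i 1 - a i 1),
                abs_nonneg (v 0), abs_nonneg (v 1)]
      have h5 := sem_apply_le s w
      have hDn : D n = (|Mn n 0 0 - a 0 0| + |Mn n 0 1 - a 0 1|)
          + (|Mn n 1 0 - a 1 0| + |Mn n 1 1 - a 1 1|) := by
        rw [hD]; simp [Fin.sum_univ_two]
      have hs0 : s (EuclideanSpace.single 0 (1:ℝ)) ≤ β := by
        rw [hβd]; linarith [apply_nonneg s (EuclideanSpace.single 1 (1:ℝ))]
      have hs1 : s (EuclideanSpace.single 1 (1:ℝ)) ≤ β := by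
        rw [hβd]; linarith [apply_nonneg s (EuclideanSpace.single 0 (1:ℝ))]
      refine h1.trans (h5.trans ?_)
      rw [hDn, add_mul]
      have hb0 : |w 0| * s (EuclideanSpace.single 0 (1:ℝ))
          ≤ (|Mn n 0 0 - a 0 0| + |Mn n 0 1 - a 0 1|) * β :=
        mul_le_mul (h4 0) hs0 (apply_nonneg s _) (by positivity)
      have hb1 : |w 1| * s (EuclideanSpace.single 1 (1:ℝ))
          ≤ (|Mn n 1 0 - a 1 0| + |Mn n 1 1 - a 1 1|) * β :=
        mul_le_mul (h4 1) hs1 (apply_nonneg s _) (by positivity)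
      exact add_le_add hb0 hb1
    obtain ⟨N2, hN2⟩ := Metric.tendsto_atTop.mp hDt δ hδ
    refine ⟨N2, fun n hn => ?_⟩
    have hd : ∀ v : E2, ‖v‖ = 1 → |compM s (Mn n) v - compM s A v| ≤ δ := by
      intro v hv
      refine (hkey n v hv).trans ?_
      have := hN2 n hn
      rw [Real.dist_eq, sub_zero] at this
      exact (le_abs_self _).trans this.le
    have := hδ' (compM s (Mn n)) hd
    rw [Real.dist_eq]
    calc |I (compM s (Mn n)) - I (compM s A)| ≤ ε/2 := this
      _ < ε := by linarith
  -- the energies converge to the infimum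
  have hval : Filter.Tendsto (fun n => I (compM s (Mn n))) Filter.atTop (nhds J) := by
    have hub : ∀ n, I (compM s (Mn n)) ≤ J + 1 / ((n:ℝ) + 1) := by
      intro n
      have h1 := hT (φ (ψ n + N))
      have hmono : n ≤ φ (ψ n + N) :=
        le_trans (le_trans hψ.le_apply (Nat.le_add_right _ N)) hφ.le_apply
      have h2 : (n:ℝ) + 1 ≤ (φ (ψ n + N) : ℝ) + 1 := by
        have : (n:ℝ) ≤ (φ (ψ n + N) : ℝ) := by exact_mod_cast hmono
        linarith
      have h3 : 1 / ((φ (ψ n + N):ℝ) + 1) ≤ 1 / ((n:ℝ) + 1) :=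
        one_div_le_one_div_of_le (by positivity) h2
      exact le_of_lt (lt_of_lt_of_le h1 (by linarith))
    have hlb : ∀ n, J ≤ I (compM s (Mn n)) := fun n =>
      csInf_le hbdd ⟨T (φ (ψ n + N)), rfl⟩
    refine tendsto_of_tendsto_of_tendsto_of_le_of_le
      (tendsto_const_nhds (x := J)) ?_ hlb hub
    have h := tendsto_one_div_add_atTop_nhds_zero_nat (𝕜 := ℝ)
    have := (tendsto_const_nhds (x := J) (f := Filter.atTop (α := ℕ))).add h
    simpa using this
  have hfinal : I (compM s A) = J := tendsto_nhds_unique hconv hval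
  refine ⟨⟨A, hdet⟩, fun T' => ?_⟩
  have hco : ((⟨A, hdet⟩ : SL2) : Matrix (Fin 2) (Fin 2) ℝ) = A := rfl
  rw [hco, hfinal]
  exact csInf_le hbdd ⟨T', rfl⟩
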